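/- For polynomials f, g, the q-Duhamel product admits the alternative expressions (f ⋆_q g)(z) = ∫_0^z (τ_q^{-t} D_q f)(z) g(t) d_q t + f(0) g(z) = ∫_0^z (τ_q^{-t} f)(z) (D_q g)(t) d_q t + f(z) g(0). -/

import Mathlib

open Finset

noncomputable def tauMon (q ξ z : ℂ) (n : ℕ) : ℂ :=
  ∏ k ∈ Finset.range n, (z + ξ * q ^ (k + 1))

/-- Linear extension of the q-translation to a power series with coefficients `a`. -/
noncomputable def tauF (q ξ : ℂ) (a : ℕ → ℂ) (z : ℂ) : ℂ :=
  ∑' n : ℕ, a n * tauMon q ξ z n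

noncomputable def jackson (q : ℂ) (f : ℂ → ℂ) (z : ℂ) : ℂ :=
  z * (1 - q) * ∑' k : ℕ, f (z * q ^ k) * q ^ k

noncomputable def Dq (q : ℂ) (f : ℂ → ℂ) (z : ℂ) : ℂ :=
  (f z - f (q * z)) / ((1 - q) * z)

noncomputable def qnum (q : ℂ) (n : ℕ) : ℂ := (1 - q ^ n) / (1 - q)

section Helpers

open Filter

lemma tauMon_zero' (q ξ z : ℂ) : tauMon q ξ z 0 = 1 := by simp [tauMon]

lemma tauMon_succ (q ξ z : ℂ) (n : ℕ) :
    tauMon q ξ z (n+1) = tauMon q ξ z n * (z + ξ * q ^ (n+1)) :=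
  Finset.prod_range_succ _ _

lemma tauMon_T4 (q x : ℂ) (n : ℕ) : tauMon q 0 x n = x ^ n := by
  simp [tauMon]

lemma tauMon_T1 (q t x : ℂ) (n : ℕ) :
    tauMon q (-t) x (n+1) - tauMon q (-t) (q*x) (n+1)
      = (1 - q^(n+1)) * x * tauMon q (-t) x n := by
  have h2 : tauMon q (-t) (q*x) (n+1) = q^(n+1) * (tauMon q (-t) x n * (x - t)) := by
    unfold tauMon
    rw [show (∏ k ∈ Finset.range (n+1), (q*x + (-t) * q ^ (k+1)))
        = ∏ k ∈ Finset.range (n+1), (q * (x + (-t) * q ^ k)) from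
      Finset.prod_congr rfl (fun k _ => by ring)]
    rw [Finset.prod_mul_distrib, Finset.prod_const, Finset.card_range,
      Finset.prod_range_succ']
    ring_nf
  rw [tauMon_succ, h2]; ring

lemma tauMon_T2 (q t x : ℂ) (n : ℕ) :
    tauMon q (-t) x (n+1) - tauMon q (-(q*t)) x (n+1)
      = -(q*t) * (1 - q^(n+1)) * tauMon q (-(q*t)) x n := by
  have h1 : tauMon q (-t) x (n+1) = tauMon q (-(q*t)) x n * (x + (-t)*q) := by
    unfold tauMon
    rw [Finset.prod_range_succ']
    congr 1
    · exact Finset.prod_congr rfl (fun k _ => by ring)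
    · ring
  have h2 : tauMon q (-(q*t)) x (n+1)
      = tauMon q (-(q*t)) x n * (x + (-t) * q^(n+2)) := by
    rw [tauMon_succ]; ring_nf
  rw [h1, h2]; ring

lemma tauMon_T3 (q t : ℂ) (n : ℕ) : tauMon q (-t) (q*t) (n+1) = 0 := by
  apply Finset.prod_eq_zero (Finset.mem_range.mpr (Nat.succ_pos n))
  ring

lemma tauMon_T5 (q z : ℂ) (n : ℕ) :
    tauMon q (-z) z (n+1) = z * (1 - q^(n+1)) * tauMon q (-z) z n := by
  rw [tauMon_succ]; ring

lemma tauMon_bound (q ξ x : ℂ) (n : ℕ) (hq : ‖q‖ ≤ 1) (R : ℝ) (hξ : ‖ξ‖ ≤ R) :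
    ‖tauMon q ξ x n‖ ≤ (‖x‖ + R) ^ n := by
  unfold tauMon
  rw [norm_prod]
  calc ∏ k ∈ Finset.range n, ‖x + ξ * q ^ (k+1)‖
      ≤ ∏ k ∈ Finset.range n, (‖x‖ + R) := by
        apply Finset.prod_le_prod (fun k _ => norm_nonneg _)
        intro k _
        calc ‖x + ξ * q ^ (k+1)‖ ≤ ‖x‖ + ‖ξ‖ * ‖q‖^(k+1) := by
              simpa [norm_mul, norm_pow] using norm_add_le x (ξ * q ^ (k+1))
          _ ≤ ‖x‖ + R := by
              have h1 : ‖q‖^(k+1) ≤ 1 := pow_le_one₀ (norm_nonneg _) hq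
              have h2 : ‖ξ‖ * ‖q‖^(k+1) ≤ R * 1 :=
                mul_le_mul hξ h1 (by positivity) (le_trans (norm_nonneg _) hξ)
              linarith
    _ = (‖x‖ + R) ^ n := by rw [Finset.prod_const, Finset.card_range]

lemma summable_geo_mul (q : ℝ) (h0 : 0 < q) (h1 : q < 1) (s : ℕ → ℂ) (C : ℝ)
    (h : ∀ k, ‖s k‖ ≤ C * q ^ k) : Summable s :=
  Summable.of_norm_bounded ((summable_geometric_of_lt_one h0.le h1).mul_left C) h

lemma tsum_telescope' (w : ℕ → ℂ) (L : ℂ) (hw : Summable (fun k => w k - w (k+1)))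
    (hl : Tendsto w Filter.atTop (nhds L)) : ∑' k, (w k - w (k+1)) = w 0 - L := by
  have h1 := hw.hasSum.tendsto_sum_nat
  have h2 : (fun n => ∑ i ∈ Finset.range n, (w i - w (i+1))) = fun n => w 0 - w n := by
    funext n; exact Finset.sum_range_sub' w n
  rw [h2] at h1
  exact tendsto_nhds_unique h1 (tendsto_const_nhds.sub hl)

lemma sum_shift_eq (c d : ℕ → ℂ) (M : ℕ) (hc0 : c 0 = 0) (hdM : d M = 0)
    (h : ∀ n, n < M → c (n+1) = d n) :
    ∑ n ∈ Finset.range (M+1), c n = ∑ n ∈ Finset.range (M+1), d n := by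
  rw [Finset.sum_range_succ', Finset.sum_range_succ, hc0, hdM, add_zero, add_zero]
  exact Finset.sum_congr rfl (fun n hn => h n (Finset.mem_range.mp hn))

end Helpers

/-- For polynomials `f(z) = Σ a_n z^n` and `g(z) = Σ b_n z^n`, the q-Duhamel product
`(f ⋆_q g)(z) = D_{q,z} ∫_0^z (τ_q^{-t} f)(z) g(t) d_q t` equals both
`∫_0^z (τ_q^{-t} D_q f)(z) g(t) d_q t + f(0) g(z)` and
`∫_0^z (τ_q^{-t} f)(z) (D_q g)(t) d_q t + f(z) g(0)`. -/
theorem qDuhamel_alternative (q : ℝ) (hq0 : 0 < q) (hq1 : q < 1) (a b : ℕ → ℂ)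
    (ha : ∃ N : ℕ, ∀ n, N ≤ n → a n = 0) (hb : ∃ N : ℕ, ∀ n, N ≤ n → b n = 0)
    (f g : ℂ → ℂ) (hf : ∀ z, f z = ∑' n : ℕ, a n * z ^ n)
    (hg : ∀ z, g z = ∑' n : ℕ, b n * z ^ n) (z : ℂ) (hz : z ≠ 0) :
    Dq (q : ℂ) (fun x => jackson (q : ℂ) (fun t => tauF (q : ℂ) (-t) a x * g t) x) z
        = jackson (q : ℂ)
            (fun t => tauF (q : ℂ) (-t) (fun n => a (n + 1) * qnum (q : ℂ) (n + 1)) z * g t) z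
          + f 0 * g z ∧
      Dq (q : ℂ) (fun x => jackson (q : ℂ) (fun t => tauF (q : ℂ) (-t) a x * g t) x) z
        = jackson (q : ℂ) (fun t => tauF (q : ℂ) (-t) a z * Dq (q : ℂ) g t) z
          + f z * g 0 := by
  obtain ⟨Na, hNa⟩ := ha
  obtain ⟨Nb, hNb⟩ := hb
  set M := max Na Nb with hM
  have ha0 : ∀ n, M ≤ n → a n = 0 := fun n h => hNa n (le_trans (le_max_left _ _) h)
  have hb0 : ∀ n, M ≤ n → b n = 0 := fun n h => hNb n (le_trans (le_max_right _ _) h)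
  set Q : ℂ := (q : ℂ) with hQdef
  have hQ0 : Q ≠ 0 := by
    simp only [hQdef, ne_eq, Complex.ofReal_eq_zero]; exact hq0.ne'
  have hQn : ‖Q‖ < 1 := by
    rw [hQdef, Complex.norm_real, Real.norm_eq_abs, abs_of_pos hq0]; exact hq1
  have hQn1 : ‖Q‖ ≤ 1 := hQn.le
  have h1Q : (1 : ℂ) - Q ≠ 0 := by
    rw [hQdef, sub_ne_zero]
    exact_mod_cast hq1.ne'
  have hQpow : ∀ k : ℕ, ‖Q ^ k‖ = q ^ k := by
    intro k
    rw [norm_pow, hQdef, Complex.norm_real, Real.norm_eq_abs, abs_of_pos hq0]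
  have hzk : ∀ k : ℕ, z * Q ^ k ≠ 0 := fun k => mul_ne_zero hz (pow_ne_zero _ hQ0)
  have hqnum : ∀ n : ℕ, qnum Q (n+1) * (1 - Q) = 1 - Q^(n+1) := by
    intro n; rw [qnum, div_mul_cancel₀ _ h1Q]
  -- finite-sum versions of all series
  set U : ℂ → ℂ → ℂ := fun x t => ∑ n ∈ Finset.range (M+1), a n * tauMon Q (-t) x n with hU
  set V : ℂ → ℂ := fun t =>
    ∑ n ∈ Finset.range (M+1), (a (n+1) * qnum Q (n+1)) * tauMon Q (-t) z n with hV
  set G : ℂ → ℂ := fun t => ∑ n ∈ Finset.range (M+1), b n * t ^ n with hG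
  set DG : ℂ → ℂ := fun t =>
    ∑ n ∈ Finset.range (M+1), (b (n+1) * qnum Q (n+1)) * t ^ n with hDG
  have hnotmem : ∀ n : ℕ, n ∉ Finset.range (M+1) → M ≤ n := by
    intro n hn; rw [Finset.mem_range] at hn; omega
  have htauF : ∀ x t : ℂ, tauF Q (-t) a x = U x t := by
    intro x t
    rw [tauF, hU]
    exact tsum_eq_sum (fun n hn => by rw [ha0 n (hnotmem n hn), zero_mul])
  have htauFV : ∀ t : ℂ, tauF Q (-t) (fun n => a (n+1) * qnum Q (n+1)) z = V t := by
    intro t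
    rw [tauF, hV]
    exact tsum_eq_sum (fun n hn => by
      rw [ha0 (n+1) (le_trans (hnotmem n hn) (Nat.le_succ n)), zero_mul, zero_mul])
  have hgG : ∀ t : ℂ, g t = G t := by
    intro t
    rw [hg, hG]
    exact tsum_eq_sum (fun n hn => by rw [hb0 n (hnotmem n hn), zero_mul])
  have hfsum : ∀ x : ℂ, f x = ∑ n ∈ Finset.range (M+1), a n * x ^ n := by
    intro x
    rw [hf]
    exact tsum_eq_sum (fun n hn => by rw [ha0 n (hnotmem n hn), zero_mul])
  have hfU : ∀ x : ℂ, f x = U x 0 := by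
    intro x
    rw [hfsum, hU]
    exact Finset.sum_congr rfl (fun n _ => by rw [neg_zero, tauMon_T4])
  have hf0 : f 0 = a 0 := by
    rw [hf]
    rw [tsum_eq_single 0 (fun n hn => by
      rw [zero_pow hn, mul_zero])]
    simp
  have hg0 : g 0 = b 0 := by
    rw [hg]
    rw [tsum_eq_single 0 (fun n hn => by
      rw [zero_pow hn, mul_zero])]
    simp
  have hDqg : ∀ t : ℂ, t ≠ 0 → Dq Q g t = DG t := by
    intro t ht
    rw [Dq, hgG, hgG, div_eq_iff (mul_ne_zero h1Q ht), hG, hDG]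
    simp only
    rw [← Finset.sum_sub_distrib, Finset.sum_mul]
    apply sum_shift_eq
    · simp
    · rw [hb0 (M+1) (Nat.le_succ M)]; ring
    · intro n _
      have := hqnum n
      linear_combination (-(b (n+1) * t^(n+1))) * this
  -- the key pointwise identities
  have I1 : ∀ t : ℂ, U z t - U (Q*z) t = ((1-Q)*z) * V t := by
    intro t
    rw [hU, hV]
    simp only
    rw [← Finset.sum_sub_distrib, Finset.mul_sum]
    apply sum_shift_eq
    · simp [tauMon_zero']
    · rw [ha0 (M+1) (Nat.le_succ M)]; ring
    · intro n _
      have h1 := tauMon_T1 Q t z n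
      have h2 := hqnum n
      linear_combination a (n+1) * h1 - (a (n+1) * z * tauMon Q (-t) z n) * h2
  have I2 : ∀ t : ℂ, U z t - U z (Q*t) = -(Q*t)*(1-Q) * V (Q*t) := by
    intro t
    rw [hU, hV]
    simp only
    rw [← Finset.sum_sub_distrib, Finset.mul_sum]
    apply sum_shift_eq
    · simp [tauMon_zero']
    · rw [ha0 (M+1) (Nat.le_succ M)]; ring
    · intro n _
      have h1 := tauMon_T2 Q t z n
      have h2 := hqnum n
      linear_combination a (n+1) * h1 + (Q * t * a (n+1) * tauMon Q (-(Q*t)) z n) * h2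
  have I3 : U (Q*z) z = a 0 := by
    rw [hU]
    simp only
    rw [Finset.sum_range_succ']
    simp [tauMon_T3, tauMon_zero']
  have I4 : U z z - z*(1-Q) * V z = a 0 := by
    have h1 : z*(1-Q) * V z = ∑ n ∈ Finset.range (M+1), a (n+1) * tauMon Q (-z) z (n+1) := by
      rw [hV]
      simp only
      rw [Finset.mul_sum]
      refine Finset.sum_congr rfl (fun n _ => ?_)
      rw [tauMon_T5]
      linear_combination (z * a (n+1) * tauMon Q (-z) z n) * hqnum n
    have h2 : U z z = (∑ n ∈ Finset.range M, a (n+1) * tauMon Q (-z) z (n+1)) + a 0 := by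
      rw [hU]
      simp only
      rw [Finset.sum_range_succ']
      simp [tauMon_zero']
    rw [h1, h2, Finset.sum_range_succ, ha0 (M+1) (Nat.le_succ M)]
    ring
  have I5 : ∀ t : ℂ, G t - G (Q*t) = (1-Q)*t * DG t := by
    intro t
    rw [hG, hDG]
    simp only
    rw [← Finset.sum_sub_distrib, Finset.mul_sum]
    apply sum_shift_eq
    · simp
    · rw [hb0 (M+1) (Nat.le_succ M)]; ring
    · intro n _
      linear_combination (-(b (n+1) * t^(n+1))) * hqnum n
  -- bounds and summability
  have hnormzQ : ∀ k : ℕ, ‖z * Q ^ k‖ ≤ ‖z‖ := by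
    intro k
    rw [norm_mul, norm_pow]
    calc ‖z‖ * ‖Q‖ ^ k ≤ ‖z‖ * 1 :=
          mul_le_mul_of_nonneg_left (pow_le_one₀ (norm_nonneg _) hQn1) (norm_nonneg _)
      _ = ‖z‖ := mul_one _
  have hUb : ∀ (x : ℂ) (k : ℕ), ‖x‖ ≤ ‖z‖ →
      ‖U x (z * Q ^ k)‖ ≤ ∑ n ∈ Finset.range (M+1), ‖a n‖ * (‖z‖ + ‖z‖) ^ n := by
    intro x k hx
    rw [hU]
    simp only
    refine le_trans (norm_sum_le _ _) (Finset.sum_le_sum (fun n _ => ?_))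
    rw [norm_mul]
    refine mul_le_mul_of_nonneg_left ?_ (norm_nonneg _)
    refine le_trans (tauMon_bound Q _ x n hQn1 ‖z‖ (by rw [norm_neg]; exact hnormzQ k)) ?_
    exact pow_le_pow_left₀ (by positivity) (add_le_add_left hx _) n
  have hVb : ∀ k : ℕ,
      ‖V (z * Q ^ k)‖ ≤ ∑ n ∈ Finset.range (M+1),
        ‖a (n+1) * qnum Q (n+1)‖ * (‖z‖ + ‖z‖) ^ n := by
    intro k
    rw [hV]
    simp only
    refine le_trans (norm_sum_le _ _) (Finset.sum_le_sum (fun n _ => ?_))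
    rw [norm_mul]
    refine mul_le_mul_of_nonneg_left ?_ (norm_nonneg _)
    refine le_trans (tauMon_bound Q _ z n hQn1 ‖z‖ (by rw [norm_neg]; exact hnormzQ k)) ?_
    exact le_refl _
  have hpowb : ∀ (k n : ℕ), ‖(z * Q ^ k) ^ n‖ ≤ ‖z‖ ^ n := by
    intro k n
    rw [norm_pow]
    exact pow_le_pow_left₀ (norm_nonneg _) (hnormzQ k) n
  have hGb : ∀ k : ℕ, ‖G (z * Q ^ k)‖ ≤ ∑ n ∈ Finset.range (M+1), ‖b n‖ * ‖z‖ ^ n := by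
    intro k
    rw [hG]
    simp only
    refine le_trans (norm_sum_le _ _) (Finset.sum_le_sum (fun n _ => ?_))
    rw [norm_mul]
    exact mul_le_mul_of_nonneg_left (hpowb k n) (norm_nonneg _)
  have hDGb : ∀ k : ℕ, ‖DG (z * Q ^ k)‖ ≤
      ∑ n ∈ Finset.range (M+1), ‖b (n+1) * qnum Q (n+1)‖ * ‖z‖ ^ n := by
    intro k
    rw [hDG]
    simp only
    refine le_trans (norm_sum_le _ _) (Finset.sum_le_sum (fun n _ => ?_))
    rw [norm_mul]
    exact mul_le_mul_of_nonneg_left (hpowb k n) (norm_nonneg _)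
  have hsummable : ∀ (φ ψ : ℂ → ℂ) (Cφ Cψ : ℝ), (∀ k : ℕ, ‖φ (z*Q^k)‖ ≤ Cφ) →
      (∀ k : ℕ, ‖ψ (z*Q^k)‖ ≤ Cψ) →
      Summable (fun k : ℕ => φ (z*Q^k) * ψ (z*Q^k) * Q^k) := by
    intro φ ψ Cφ Cψ hφ hψ
    apply summable_geo_mul q hq0 hq1 _ (Cφ * Cψ)
    intro k
    rw [norm_mul, norm_mul, hQpow]
    have h0φ : 0 ≤ Cφ := le_trans (norm_nonneg _) (hφ 0)
    have h0ψ : 0 ≤ Cψ := le_trans (norm_nonneg _) (hψ 0)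
    have hqk : (0:ℝ) ≤ q ^ k := by positivity
    exact mul_le_mul_of_nonneg_right
      (mul_le_mul (hφ k) (hψ k) (norm_nonneg _) h0φ) hqk
  set s₁ : ℕ → ℂ := fun k => U z (z*Q^k) * G (z*Q^k) * Q^k with hs₁
  set s₂ : ℕ → ℂ := fun k => U (Q*z) (z*Q^k) * G (z*Q^k) * Q^k with hs₂
  set S : ℕ → ℂ := fun k => V (z*Q^k) * G (z*Q^k) * Q^k with hS
  set s₄ : ℕ → ℂ := fun k => U z (z*Q^k) * DG (z*Q^k) * Q^k with hs₄
  set w : ℕ → ℂ := fun k => U z (z*Q^k) * G (z*Q^k) with hw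
  have hQzle : ‖Q*z‖ ≤ ‖z‖ := by
    rw [norm_mul]
    calc ‖Q‖ * ‖z‖ ≤ 1 * ‖z‖ := mul_le_mul_of_nonneg_right hQn1 (norm_nonneg _)
      _ = ‖z‖ := one_mul _
  have Sum1 : Summable s₁ := hsummable (U z) G _ _ (fun k => hUb z k le_rfl) hGb
  have Sum2 : Summable s₂ := hsummable (U (Q*z)) G _ _ (fun k => hUb (Q*z) k hQzle) hGb
  have Sum3 : Summable S := hsummable V G _ _ hVb hGb
  have Sum4 : Summable s₄ := hsummable (U z) DG _ _ (fun k => hUb z k le_rfl) hDGb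
  have Sum3' : Summable (fun k => S (k+1)) := (summable_nat_add_iff 1).mpr Sum3
  have key : ∀ k : ℕ, z*(1-Q) * s₄ k = (w k - w (k+1)) + z*(1-Q) * S (k+1) := by
    intro k
    have e : Q * (z*Q^k) = z*Q^(k+1) := by ring
    have h5 := I5 (z*Q^k); rw [e] at h5
    have h2 := I2 (z*Q^k); rw [e] at h2
    simp only [hs₄, hw, hS]
    linear_combination (-(U z (z*Q^k))) * h5 + (-(G (z*Q^(k+1)))) * h2
  have Sumw : Summable (fun k => w k - w (k+1)) := by
    refine Summable.congr ((Sum4.mul_left (z*(1-Q))).sub (Sum3'.mul_left (z*(1-Q)))) ?_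
    intro k
    linear_combination key k
  have hcont : Continuous (fun t : ℂ => U z t * G t) := by
    simp only [hU, hG]
    apply Continuous.mul
    · apply continuous_finset_sum
      intro n _
      apply Continuous.mul continuous_const
      unfold tauMon
      apply continuous_finset_prod
      intro k _
      fun_prop
    · apply continuous_finset_sum
      intro n _
      fun_prop
  have htend : Filter.Tendsto (fun k : ℕ => z * Q^k) Filter.atTop (nhds 0) := by
    have h := (tendsto_pow_atTop_nhds_zero_of_norm_lt_one hQn).const_mul z
    simpa using h
  have hwlim : Filter.Tendsto w Filter.atTop (nhds (f z * g 0)) := by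
    have h := (hcont.tendsto 0).comp htend
    simp only [Function.comp_def] at h
    have e : U z 0 * G 0 = f z * g 0 := by rw [← hfU z, ← hgG 0]
    rw [e] at h
    exact h
  have htel : ∑' k, (w k - w (k+1)) = U z z * G z - f z * g 0 := by
    rw [tsum_telescope' w (f z * g 0) Sumw hwlim]
    congr 1
    simp [hw]
  have hFz : jackson Q (fun t => tauF Q (-t) a z * g t) z = z*(1-Q) * ∑' k, s₁ k := by
    rw [jackson]
    congr 1
    exact tsum_congr (fun k => by simp only [hs₁, htauF, hgG])
  have hFqz : jackson Q (fun t => tauF Q (-t) a (Q*z) * g t) (Q*z)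
      = z*(1-Q) * ((∑' k, s₂ k) - s₂ 0) := by
    rw [jackson]
    have h1 : ∀ k : ℕ, (fun t => tauF Q (-t) a (Q*z) * g t) (Q*z*Q^k) * Q^k
        = Q⁻¹ * s₂ (k+1) := by
      intro k
      simp only [hs₂, htauF, hgG]
      have e : Q*z*Q^k = z*Q^(k+1) := by ring
      rw [e, pow_succ]
      field_simp
    rw [tsum_congr h1, tsum_mul_left]
    have h2 : ∑' k, s₂ (k+1) = (∑' k, s₂ k) - s₂ 0 := by
      rw [Summable.tsum_eq_zero_add Sum2]; ring
    rw [h2]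
    field_simp
  have main1 : Dq Q (fun x => jackson Q (fun t => tauF Q (-t) a x * g t) x) z
      = z*(1-Q) * ∑' k, S k + a 0 * G z := by
    simp only [Dq]
    rw [hFz, hFqz]
    have hdiff : (∑' k, s₁ k) - ∑' k, s₂ k = ((1-Q)*z) * ∑' k, S k := by
      rw [← Summable.tsum_sub Sum1 Sum2]
      have h : ∀ k, s₁ k - s₂ k = ((1-Q)*z) * S k := by
        intro k
        simp only [hs₁, hs₂, hS]
        have h1 := I1 (z*Q^k)
        linear_combination (G (z*Q^k) * Q^k) * h1
      rw [tsum_congr h, tsum_mul_left]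
    have hs20 : s₂ 0 = a 0 * G z := by
      simp only [hs₂, pow_zero, mul_one]
      rw [I3]
    rw [div_eq_iff (mul_ne_zero h1Q hz)]
    linear_combination (z*(1-Q))*hdiff + (z*(1-Q))*hs20
  constructor
  · rw [main1]
    have hR : jackson Q
        (fun t => tauF Q (-t) (fun n => a (n+1) * qnum Q (n+1)) z * g t) z
        = z*(1-Q) * ∑' k, S k := by
      rw [jackson]
      congr 1
      exact tsum_congr (fun k => by simp only [hS, htauFV, hgG])
    rw [hR, hf0, hgG z]
  · rw [main1]
    have hR2 : jackson Q (fun t => tauF Q (-t) a z * Dq Q g t) z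
        = z*(1-Q) * ∑' k, s₄ k := by
      rw [jackson]
      congr 1
      refine tsum_congr (fun k => ?_)
      simp only [hs₄, htauF]
      rw [hDqg _ (hzk k)]
    rw [hR2]
    have h48 : z*(1-Q) * ∑' k, s₄ k
        = (∑' k, (w k - w (k+1))) + z*(1-Q) * ∑' k, S (k+1) := by
      rw [← tsum_mul_left, ← tsum_mul_left, ← Summable.tsum_add Sumw (Sum3'.mul_left _)]
      exact tsum_congr key
    have hSsh : ∑' k, S (k+1) = (∑' k, S k) - S 0 := by
      rw [Summable.tsum_eq_zero_add Sum3]; ring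
    have hS0 : S 0 = V z * G z := by
      simp only [hS, pow_zero, mul_one]
    linear_combination (-1:ℂ)*h48 - htel - (z*(1-Q))*hSsh - G z * I4 + (z*(1-Q))*hS0
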